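/- Let D be a digraph of order n ≥ 3 containing a cycle C = x_1 x_2 … x_{n−1} x_1 of length n−1, and let y be the vertex not on C. If D contains no Hamiltonian bypass, then for every i ∈ [1, n−1]: at most one of y x_i, y x_{i+1} is an arc of D, and at most one of x_i y, x_{i+1} y is an arc of D (indices modulo n−1). -/

import Mathlib

open Finset

/-- A list of distinct vertices whose consecutive members are joined by arcs. -/
def IsPathList {V : Type*} (A : V → V → Prop) (p : List V) : Prop :=
  p.Nodup ∧ p.Chain' A

/-- A directed cycle: at least two distinct vertices, consecutive arcs, and an arc
from the last vertex back to the first. -/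
def IsCycleList {V : Type*} (A : V → V → Prop) (c : List V) : Prop :=
  2 ≤ c.length ∧ c.Nodup ∧ c.Chain' A ∧ ∀ h : c ≠ [], A (c.getLast h) (c.head h)

/-- A Hamiltonian bypass: a Hamiltonian path `v₁ v₂ … vₙ` together with the arc `v₁ vₙ`. -/
def HasHamBypass {V : Type*} (A : V → V → Prop) : Prop :=
  ∃ l : List V, l.Nodup ∧ (∀ v, v ∈ l) ∧ l.Chain' A ∧
    ∀ h : l ≠ [], A (l.head h) (l.getLast h)

/-- A Hamiltonian cycle. -/
def HasHamCycle {V : Type*} (A : V → V → Prop) : Prop :=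
  ∃ c : List V, IsCycleList A c ∧ ∀ v, v ∈ c

/-- out-degree of `x` towards a set `S`. -/
def outDegOn {V : Type*} [DecidableEq V] (A : V → V → Prop) [DecidableRel A]
    (x : V) (S : Finset V) : ℕ := (S.filter fun y => A x y).card

/-- in-degree of `x` from a set `S`. -/
def inDegOn {V : Type*} [DecidableEq V] (A : V → V → Prop) [DecidableRel A]
    (x : V) (S : Finset V) : ℕ := (S.filter fun y => A y x).card

/-- degree of `x` with respect to a set `S` (arcs in both directions). -/
def degOn {V : Type*} [DecidableEq V] (A : V → V → Prop) [DecidableRel A]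
    (x : V) (S : Finset V) : ℕ := outDegOn A x S + inDegOn A x S

/-- out-degree of `x`. -/
def outDeg {V : Type*} [Fintype V] [DecidableEq V] (A : V → V → Prop) [DecidableRel A]
    (x : V) : ℕ := outDegOn A x Finset.univ

/-- in-degree of `x`. -/
def inDeg {V : Type*} [Fintype V] [DecidableEq V] (A : V → V → Prop) [DecidableRel A]
    (x : V) : ℕ := inDegOn A x Finset.univ

/-- degree of `x`. -/
def deg {V : Type*} [Fintype V] [DecidableEq V] (A : V → V → Prop) [DecidableRel A]
    (x : V) : ℕ := outDeg A x + inDeg A x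

/-- The condition `A_k` of Manoussakis: for every triple of distinct vertices `x, y, z`
with `x` and `y` non-adjacent, if `xz` is not an arc then
`d(x)+d(y)+d⁺(x)+d⁻(z) ≥ 3n-2+k`, and if `zx` is not an arc then
`d(x)+d(y)+d⁻(x)+d⁺(z) ≥ 3n-2+k`. -/
def CondA {V : Type*} [Fintype V] [DecidableEq V] (A : V → V → Prop) [DecidableRel A]
    (k : ℤ) : Prop :=
  ∀ x y z : V, x ≠ y → z ≠ x → z ≠ y → ¬A x y → ¬A y x →
    (¬A x z → (deg A x + deg A y + outDeg A x + inDeg A z : ℤ) ≥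
      3 * (Fintype.card V : ℤ) - 2 + k) ∧
    (¬A z x → (deg A x + deg A y + inDeg A x + outDeg A z : ℤ) ≥
      3 * (Fintype.card V : ℤ) - 2 + k)



private lemma get_eq_of_eq {V : Type*} {c : List V} {a b : ℕ} (ha : a < c.length)
    (hb : b < c.length) (hab : a = b) : c.get ⟨a, ha⟩ = c.get ⟨b, hb⟩ := by
  subst hab; rfl

private lemma cyc_arc {V : Type*} {A : V → V → Prop} {c : List V} (hc : IsCycleList A c) :
    ∀ j : ℕ, ∀ h : j < c.length,
      A (c.get ⟨j, h⟩) (c.get ⟨(j + 1) % c.length, Nat.mod_lt _ (by omega)⟩) := by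
  obtain ⟨hlen, -, hch, hwrap⟩ := hc
  intro j h
  have hne : c ≠ [] := by intro hcon; simp [hcon] at hlen
  rcases lt_or_ge (j + 1) c.length with hj | hj
  · have := List.isChain_iff_getElem.mp hch j (by omega)
    simpa [List.get_eq_getElem, Nat.mod_eq_of_lt hj] using this
  · have hj' : j = c.length - 1 := by omega
    have e1 : j + 1 = c.length := by omega
    have h0 : (j + 1) % c.length = 0 := by rw [e1, Nat.mod_self]
    have := hwrap hne
    rw [List.getLast_eq_getElem, List.head_eq_getElem_zero hne] at this
    rw [get_eq_of_eq h (by omega) hj', get_eq_of_eq _ (by omega) h0]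
    simpa [List.get_eq_getElem] using this

private lemma rot_get {V : Type*} (c : List V) (k : ℕ) (hne : 0 < c.length)
    (i : ℕ) (hi : i < (c.rotate k).length) :
    (c.rotate k).get ⟨i, hi⟩ = c.get ⟨(i + k) % c.length, Nat.mod_lt _ hne⟩ :=
  List.get_rotate c k ⟨i, hi⟩

private lemma rot_chain {V : Type*} {A : V → V → Prop} {c : List V} (hc : IsCycleList A c)
    (k : ℕ) : (c.rotate k).Chain' A := by
  have hpos : 0 < c.length := by have := hc.1; omega
  change List.IsChain A _; rw [List.isChain_iff_getElem]
  intro i hi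
  show A ((c.rotate k).get ⟨i, by omega⟩) ((c.rotate k).get ⟨i + 1, hi⟩)
  rw [List.length_rotate] at hi
  rw [rot_get c k hpos i (by simp; omega), rot_get c k hpos (i+1) (by simp; omega)]
  have := cyc_arc hc ((i + k) % c.length) (Nat.mod_lt _ hpos)
  have e2 : c.get ⟨((i + k) % c.length + 1) % c.length, Nat.mod_lt _ hpos⟩
      = c.get ⟨(i + 1 + k) % c.length, Nat.mod_lt _ hpos⟩ :=
    get_eq_of_eq _ _ (by rw [Nat.mod_add_mod]; congr 1; omega)
  rw [← e2]
  exact this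

/-- Lemma 7(i). -/
theorem stmt7 {V : Type*} [Fintype V] [DecidableEq V] (A : V → V → Prop) [DecidableRel A]
    (hirr : ∀ v, ¬A v v) (hn : 3 ≤ Fintype.card V)
    (c : List V) (hc : IsCycleList A c) (hlen : c.length = Fintype.card V - 1)
    (y : V) (hy : y ∉ c)
    (hnb : ¬HasHamBypass A) :
    ∀ i : ℕ, ∀ h : i < c.length,
      ¬(A y (c.get ⟨i, h⟩) ∧ A y (c.get ⟨(i + 1) % c.length, Nat.mod_lt _ (by omega)⟩)) ∧
      ¬(A (c.get ⟨i, h⟩) y ∧ A (c.get ⟨(i + 1) % c.length, Nat.mod_lt _ (by omega)⟩) y) := by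
  intro i h
  have hpos : 0 < c.length := by omega
  have hne : c ≠ [] := by intro hcon; simp [hcon] at h
  have hrne : c.rotate (i + 1) ≠ [] := by
    intro hcon
    have := congrArg List.length hcon
    simp only [List.length_rotate, List.length_nil] at this
    omega
  have hrlen : (c.rotate (i + 1)).length = c.length := List.length_rotate c _
  have hrhead : (c.rotate (i + 1)).head hrne
      = c.get ⟨(i + 1) % c.length, Nat.mod_lt _ hpos⟩ := by
    rw [List.head_eq_getElem_zero hrne,
      ← List.get_eq_getElem (l := c.rotate (i + 1)) (i := ⟨0, by omega⟩),
      rot_get c (i + 1) hpos 0 (by omega)]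
    exact get_eq_of_eq _ _ (by rw [Nat.zero_add])
  have hrlast : (c.rotate (i + 1)).getLast hrne = c.get ⟨i, h⟩ := by
    rw [List.getLast_eq_getElem,
      ← List.get_eq_getElem (l := c.rotate (i + 1)) (i := ⟨(c.rotate (i+1)).length - 1, by omega⟩),
      rot_get c (i + 1) hpos _ (by omega)]
    refine get_eq_of_eq _ _ ?_
    have e : (c.rotate (i+1)).length - 1 + (i + 1) = i + c.length := by omega
    rw [e, Nat.add_mod_right, Nat.mod_eq_of_lt h]
  have hrchain : (c.rotate (i + 1)).Chain' A := rot_chain hc (i + 1)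
  have hrnodup : (c.rotate (i + 1)).Nodup := List.nodup_rotate.mpr hc.2.1
  have hyr : y ∉ c.rotate (i + 1) :=
    fun hcon => hy ((List.rotate_perm c (i+1)).mem_iff.mp hcon)
  have hcover : ∀ (l : List V), l.Nodup → l.length = Fintype.card V → ∀ v, v ∈ l := by
    intro l hnd hl v
    have : l.toFinset = Finset.univ := by
      apply Finset.eq_univ_of_card
      rw [List.toFinset_card_of_nodup hnd, hl]
    rw [← List.mem_toFinset, this]
    exact Finset.mem_univ v
  constructor
  · rintro ⟨h1, h2⟩
    apply hnb
    refine ⟨y :: c.rotate (i + 1), ?_, ?_, ?_, ?_⟩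
    · simp [List.nodup_cons, hyr, hrnodup]
    · refine hcover _ (by simp [List.nodup_cons, hyr, hrnodup]) ?_
      simp only [List.length_cons, hrlen]
      omega
    · change List.IsChain A _; rw [List.isChain_cons]
      refine ⟨?_, hrchain⟩
      intro b hb
      rw [List.head?_eq_head hrne] at hb
      obtain rfl : b = (c.rotate (i+1)).head hrne := by simpa using hb.symm
      rw [hrhead]; exact h2
    · intro _
      rw [List.getLast_cons hrne, hrlast]
      simpa using h1
  · rintro ⟨h1, h2⟩
    apply hnb
    refine ⟨c.rotate (i + 1) ++ [y], ?_, ?_, ?_, ?_⟩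
    · simp [List.nodup_append, hyr, hrnodup]
      rintro a ha rfl; exact hy ha
    · refine hcover _ (by simp [List.nodup_append, hyr, hrnodup]; rintro a ha rfl; exact hy ha) ?_
      simp only [List.length_append, List.length_cons, List.length_nil, hrlen]
      omega
    · change List.IsChain A _; rw [List.isChain_append]
      refine ⟨hrchain, by simp, ?_⟩
      intro a ha b hb
      rw [List.getLast?_eq_getLast hrne] at ha
      obtain rfl : a = (c.rotate (i+1)).getLast hrne := by simpa using ha.symm
      obtain rfl : b = y := by simpa using hb.symm
      rw [hrlast]; exact h1
    · intro hne'
      rw [List.getLast_concat, List.head_append_of_ne_nil hrne, hrhead]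
      exact h2
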